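/- Suppose argmax_i μ̲_i = {i*}. For any type profile t ∈ 𝒯 and any target mean μ_{i*} ∈ [μ̲_{i*}, μ̄_{i*}], there exist a scenario t̂ ∈ 𝒯 with max_{i ≠ i*} t̂_i < μ̲_{i*} and a product probability distribution ℙ on 𝒯 with independent coordinates such that each coordinate t̃_i is supported on {t_i, t̂_i}, E_ℙ[t̃_{i*}] = μ_{i*}, E_ℙ[t̃_i] ∈ [μ̲_i, μ̄_i] for all i, and ℙ({t}) > 0. -/

import Mathlib

open MeasureTheory

/-- The type space: every coordinate lies in `[tlo i, thi i]`. -/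
def InT {ι : Type*} (tlo thi : ι → ℝ) (t : ι → ℝ) : Prop :=
  ∀ i, t i ∈ Set.Icc (tlo i) (thi i)

/-- Membership in the Markov ambiguity set: a probability distribution supported on the
type space whose marginal means lie in `[mlo i, mhi i]`. -/
def InP {ι : Type*} [Fintype ι] (tlo thi mlo mhi : ι → ℝ) (P : Measure (ι → ℝ)) : Prop :=
  IsProbabilityMeasure P ∧ (∀ᵐ t ∂P, InT tlo thi t) ∧
    ∀ i, ∫ t, t i ∂P ∈ Set.Icc (mlo i) (mhi i)

/-- The principal's payoff in scenario `t`. -/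
def Pay {ι : Type*} [Fintype ι] (c : ι → ℝ) (p q : (ι → ℝ) → ι → ℝ) (t : ι → ℝ) : ℝ :=
  ∑ i, (p t i * t i - q t i * c i)

/-- Feasibility: values in `[0,1]`, `q ≤ p`, and total allocation at most one, on the type space. -/
def Feas {ι : Type*} [Fintype ι] (tlo thi : ι → ℝ) (p q : (ι → ℝ) → ι → ℝ) : Prop :=
  ∀ t, InT tlo thi t →
    (∀ i, 0 ≤ q t i ∧ q t i ≤ p t i ∧ p t i ≤ 1) ∧ ∑ i, p t i ≤ 1

/-- Incentive compatibility: no agent gains by misreporting his type. -/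
def IC {ι : Type*} [DecidableEq ι] (tlo thi : ι → ℝ) (p q : (ι → ℝ) → ι → ℝ) : Prop :=
  ∀ i, ∀ t, InT tlo thi t → ∀ s ∈ Set.Icc (tlo i) (thi i),
    p (Function.update t i s) i - q (Function.update t i s) i ≤ p t i

/-- The coordinates `t̃_1, …, t̃_I` are mutually independent under `P`. -/
def IndepCoords {ι : Type*} [Fintype ι] (P : MeasureTheory.Measure (ι → ℝ)) : Prop :=
  ProbabilityTheory.iIndepFun (fun i (t : ι → ℝ) => t i) P

section aux
variable {ι : Type*} [Fintype ι]

lemma pi_cylinder (ν : ι → Measure ℝ) [∀ i, IsProbabilityMeasure (ν i)]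
    (S : Finset ι) (A : ι → Set ℝ) :
    Measure.pi ν (⋂ i ∈ S, (fun s : ι → ℝ => s i) ⁻¹' A i) = ∏ i ∈ S, ν i (A i) := by
  classical
  have hset : (⋂ i ∈ S, (fun s : ι → ℝ => s i) ⁻¹' A i)
      = Set.pi Set.univ (fun i => if i ∈ S then A i else Set.univ) := by
    ext x
    simp only [Set.mem_iInter, Set.mem_preimage, Set.mem_pi, Set.mem_univ, true_implies]
    constructor
    · intro h i
      by_cases hi : i ∈ S
      · simpa [hi] using h i hi
      · simp [hi]
    · intro h i hi
      have := h i
      rwa [if_pos hi] at this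
  rw [hset, Measure.pi_pi]
  calc ∏ i, ν i (if i ∈ S then A i else Set.univ)
      = ∏ i, (if i ∈ S then ν i (A i) else 1) := by
        refine Finset.prod_congr rfl fun i _ => ?_
        by_cases hi : i ∈ S <;> simp [hi]
    _ = ∏ i ∈ S, ν i (A i) := Fintype.prod_ite_mem S _

lemma map_eval_pi (ν : ι → Measure ℝ) [∀ i, IsProbabilityMeasure (ν i)] (i : ι) :
    (Measure.pi ν).map (fun s => s i) = ν i := by
  ext A hA
  rw [Measure.map_apply (measurable_pi_apply i) hA]
  simpa using pi_cylinder ν {i} (fun _ => A)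

lemma integrable_dirac'' (a : ℝ) : Integrable (fun x : ℝ => x) (Measure.dirac a) := by
  have h : (fun x : ℝ => x) =ᵐ[Measure.dirac a] fun _ => a := by
    refine (ae_dirac_iff ?_).2 rfl
    simpa using (measurableSet_singleton a)
  exact (integrable_const a).congr h.symm

lemma twopoint_integral (a b α : ℝ) (h0 : 0 ≤ α) (h1 : α ≤ 1) :
    ∫ x, x ∂(ENNReal.ofReal α • Measure.dirac a + ENNReal.ofReal (1 - α) • Measure.dirac b)
      = α * a + (1 - α) * b := by
  have hia : Integrable (fun x : ℝ => x) (ENNReal.ofReal α • Measure.dirac a) :=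
    (integrable_dirac'' a).smul_measure ENNReal.ofReal_ne_top
  have hib : Integrable (fun x : ℝ => x) (ENNReal.ofReal (1 - α) • Measure.dirac b) :=
    (integrable_dirac'' b).smul_measure ENNReal.ofReal_ne_top
  rw [integral_add_measure hia hib, integral_smul_measure, integral_smul_measure,
    integral_dirac, integral_dirac, ENNReal.toReal_ofReal h0,
    ENNReal.toReal_ofReal (by linarith)]
  simp [smul_eq_mul]

lemma mean_eq' {a b m : ℝ} (hab : a ≠ b) :
    ((m - b) / (a - b)) * a + (1 - (m - b) / (a - b)) * b = m := by
  have h : a - b ≠ 0 := sub_ne_zero.2 hab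
  field_simp
  ring

end aux

/-- Suppose `argmax_i μ̲_i = {i*}`. For any type profile `t ∈ 𝒯` and
any target mean `μ_{i*} ∈ [μ̲_{i*}, μ̄_{i*}]`, there exist a scenario `t̂ ∈ 𝒯` with
`max_{i ≠ i*} t̂_i < μ̲_{i*}` and a probability distribution `P` on `𝒯` with independent
coordinates such that each coordinate is supported on `{t_i, t̂_i}`, the mean of
coordinate `i*` equals `μ_{i*}`, all coordinate means lie in `[μ̲_i, μ̄_i]`, and `P`
places positive probability on `{t}`. -/
theorem stmt_18 {ι : Type*} [Fintype ι] [Nonempty ι]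
    (tlo thi mlo mhi : ι → ℝ)
    (h1 : ∀ i, tlo i < mlo i) (h2 : ∀ i, mlo i ≤ mhi i) (h3 : ∀ i, mhi i < thi i)
    (istar : ι) (hstar : ∀ i, i ≠ istar → mlo i < mlo istar)
    (t : ι → ℝ) (ht : InT tlo thi t)
    (μstar : ℝ) (hμ : μstar ∈ Set.Icc (mlo istar) (mhi istar)) :
    ∃ (that : ι → ℝ) (P : Measure (ι → ℝ)),
      InT tlo thi that ∧ (∀ i, i ≠ istar → that i < mlo istar) ∧
      IsProbabilityMeasure P ∧
      (∀ᵐ s ∂P, InT tlo thi s) ∧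
      IndepCoords P ∧
      (∀ i, ∀ᵐ s ∂P, s i ∈ ({t i, that i} : Set ℝ)) ∧
      (∫ s, s istar ∂P) = μstar ∧
      (∀ i, ∫ s, s i ∂P ∈ Set.Icc (mlo i) (mhi i)) ∧
      0 < P {t} := by
  classical
  obtain ⟨hμ1, hμ2⟩ := hμ
  set m : ι → ℝ := fun i => if i = istar then μstar else mlo i with hm
  have hmstar : m istar = μstar := by simp [hm]
  have hmlo : ∀ i, mlo i ≤ m i := by
    intro i; simp only [hm]; split_ifs with h
    · subst h; exact hμ1
    · exact le_rfl
  have hmhi : ∀ i, m i ≤ mhi i := by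
    intro i; simp only [hm]; split_ifs with h
    · subst h; exact hμ2
    · exact h2 i
  have hex : ∀ i, ∃ b a : ℝ, 0 < a ∧ a ≤ 1 ∧ tlo i ≤ b ∧ b ≤ thi i ∧
      (i ≠ istar → b < mlo istar) ∧ a * t i + (1 - a) * b = m i := by
    intro i
    rcases le_or_gt (m i) (t i) with hle | hlt
    · have hd : tlo i < m i := lt_of_lt_of_le (h1 i) (hmlo i)
      have hd2 : 0 < t i - tlo i := by linarith
      refine ⟨tlo i, (m i - tlo i) / (t i - tlo i), div_pos (by linarith) hd2,
        div_le_one_of_le₀ (by linarith) hd2.le, le_rfl,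
        by linarith [h1 i, h2 i, h3 i], fun hi => by linarith [hstar i hi, h1 i], ?_⟩
      exact mean_eq' (by linarith)
    · set b : ℝ := if i = istar then thi i else min (thi i) ((mlo i + mlo istar) / 2) with hb
      have hbm : m i < b := by
        simp only [hb]; split_ifs with h
        · rw [h, hmstar]; linarith [h3 istar, hμ2, h2 istar]
        · have : m i = mlo i := by simp [hm, h]
          rw [this, lt_min_iff]
          exact ⟨by linarith [h2 i, h3 i], by linarith [hstar i h]⟩
      have hb_thi : b ≤ thi i := by
        simp only [hb]; split_ifs with h
        · exact le_rfl
        · exact min_le_left _ _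
      have hb_tlo : tlo i ≤ b :=
        le_of_lt (lt_trans (lt_of_lt_of_le (h1 i) (hmlo i)) hbm)
      have hbstar : i ≠ istar → b < mlo istar := by
        intro h
        simp only [hb, if_neg h]
        exact lt_of_le_of_lt (min_le_right _ _) (by linarith [hstar i h])
      have hd2 : 0 < b - t i := by linarith
      have heq : (m i - b) / (t i - b) = (b - m i) / (b - t i) := by
        rw [← neg_div_neg_eq]; ring_nf
      refine ⟨b, (m i - b) / (t i - b), ?_, ?_, hb_tlo, hb_thi, hbstar, ?_⟩
      · rw [heq]; exact div_pos (by linarith) hd2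
      · rw [heq]; exact div_le_one_of_le₀ (by linarith) hd2.le
      · exact mean_eq' (by linarith)
  choose that α hα0 hα1 hb1 hb2 hbstar hmean using hex
  set ν : ι → Measure ℝ := fun i =>
    ENNReal.ofReal (α i) • Measure.dirac (t i) +
      ENNReal.ofReal (1 - α i) • Measure.dirac (that i) with hν
  haveI hprob : ∀ i, IsProbabilityMeasure (ν i) := by
    intro i
    constructor
    simp only [hν, Measure.add_apply, Measure.smul_apply, measure_univ, smul_eq_mul, mul_one]
    rw [← ENNReal.ofReal_add (hα0 i).le (by linarith [hα1 i])]
    norm_num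
  have hsupp : ∀ i, ∀ᵐ x ∂ν i, x ∈ ({t i, that i} : Set ℝ) := by
    intro i
    have hms : MeasurableSet {x : ℝ | x ∈ ({t i, that i} : Set ℝ)} := by
      simp only [Set.setOf_mem_eq]
      exact (measurableSet_singleton (that i)).insert (t i)
    refine ae_add_measure_iff.2 ⟨?_, ?_⟩
    · exact Measure.ae_smul_measure ((ae_dirac_iff hms).2 (by simp)) _
    · exact Measure.ae_smul_measure ((ae_dirac_iff hms).2 (by simp)) _
  have hIcc : ∀ i, ∀ᵐ x ∂ν i, x ∈ Set.Icc (tlo i) (thi i) := by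
    intro i
    refine (hsupp i).mono fun x hx => ?_
    rcases hx with h | h
    · rw [h]; exact ht i
    · rw [Set.mem_singleton_iff] at h; rw [h]; exact ⟨hb1 i, hb2 i⟩
  have hint : ∀ i, ∫ s, s i ∂(Measure.pi ν) = m i := by
    intro i
    calc ∫ s, s i ∂(Measure.pi ν)
        = ∫ x, x ∂((Measure.pi ν).map (fun s => s i)) :=
          (integral_map (μ := Measure.pi ν) (φ := fun s => s i)
            (f := fun x : ℝ => x) (measurable_pi_apply i).aemeasurable
            measurable_id.aestronglyMeasurable).symm
      _ = ∫ x, x ∂(ν i) := by rw [map_eval_pi]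
      _ = α i * t i + (1 - α i) * that i :=
          twopoint_integral _ _ _ (hα0 i).le (hα1 i)
      _ = m i := hmean i
  refine ⟨that, Measure.pi ν, fun i => ⟨hb1 i, hb2 i⟩, fun i hi => hbstar i hi,
    inferInstance, ?_, ?_, ?_, ?_, ?_, ?_⟩
  · exact ae_all_iff.2 fun i => Measure.tendsto_eval_ae_ae.eventually (hIcc i)
  · rw [IndepCoords, ProbabilityTheory.iIndepFun_iff_measure_inter_preimage_eq_mul]
    intro S sets _
    rw [pi_cylinder ν S sets]
    refine Finset.prod_congr rfl fun i _ => ?_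
    have h := pi_cylinder ν {i} (fun _ => sets i)
    simp only [Finset.mem_singleton, Set.iInter_iInter_eq_left, Finset.prod_singleton] at h
    exact h.symm
  · exact fun i => Measure.tendsto_eval_ae_ae.eventually (hsupp i)
  · rw [hint istar, hmstar]
  · exact fun i => by rw [hint i]; exact ⟨hmlo i, hmhi i⟩
  · rw [show ({t} : Set (ι → ℝ)) = Set.pi Set.univ (fun i => {t i}) from
      (Set.univ_pi_singleton t).symm, Measure.pi_pi]
    refine CanonicallyOrderedAdd.prod_pos.2 fun i _ => ?_
    have hle : ENNReal.ofReal (α i) ≤ ν i {t i} := by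
      calc ENNReal.ofReal (α i)
          = ENNReal.ofReal (α i) * Measure.dirac (t i) {t i} := by
            rw [Measure.dirac_apply_of_mem (Set.mem_singleton _), mul_one]
        _ ≤ ν i {t i} := by
            simp only [hν, Measure.add_apply, Measure.smul_apply, smul_eq_mul]
            exact le_self_add
    exact lt_of_lt_of_le (ENNReal.ofReal_pos.2 (hα0 i)) hle
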